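/- For every integer n ≥ 0 and every k ∈ ℤ, the two-parameter Hurwitz-Lerch type poly-Bernoulli numbers satisfy the binomial recurrence ∑_{j=0}^{n} C(n, j) · B_{j+1}^{(k)}(α,a) = ∑_{m=1}^{n+1} (-1)^{n+m-1} · m! · {n, m-1} · (αm + a)^{-k}, where C(n, j) denotes the binomial coefficient. -/

import Mathlib

open PowerSeries Finset

/-- Unsigned Stirling numbers of the first kind. -/
def stirling1 : ℕ → ℕ → ℕ
  | 0, 0 => 1
  | 0, _ + 1 => 0
  | _ + 1, 0 => 0
  | n + 1, m + 1 => stirling1 n m + n * stirling1 n (m + 1)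

/-- Stirling numbers of the second kind. -/
def stirling2 : ℕ → ℕ → ℕ
  | 0, 0 => 1
  | 0, _ + 1 => 0
  | _ + 1, 0 => 0
  | n + 1, m + 1 => stirling2 n m + (m + 1) * stirling2 n (m + 1)

/-- Two-parameter Hurwitz-Lerch type poly-Bernoulli numbers
    `B_n^{(k)}(α,a) = (-1)^n ∑_{m=0}^n (-1)^m m! {n m} (αm+a)^{-k}`. -/
noncomputable def polyBernoulli (k : ℤ) (α a : ℂ) (n : ℕ) : ℂ :=
  (-1 : ℂ) ^ n * ∑ m ∈ Finset.range (n + 1),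
    (-1 : ℂ) ^ m * (m.factorial : ℂ) * (stirling2 n m : ℂ) * (α * m + a) ^ (-k)

/-- Two-parameter Hurwitz-Lerch type poly-Cauchy numbers of the first kind
    `c_n^{(k)}(α,a) = (-1)^n ∑_{m=0}^n (-1)^m [n m] (αm+a)^{-k}`. -/
noncomputable def polyCauchy1 (k : ℤ) (α a : ℂ) (n : ℕ) : ℂ :=
  (-1 : ℂ) ^ n * ∑ m ∈ Finset.range (n + 1),
    (-1 : ℂ) ^ m * (stirling1 n m : ℂ) * (α * m + a) ^ (-k)

/-- Two-parameter Hurwitz-Lerch type poly-Cauchy numbers of the second kind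
    `ĉ_n^{(k)}(α,a) = (-1)^n ∑_{m=0}^n [n m] (αm+a)^{-k}`. -/
noncomputable def polyCauchy2 (k : ℤ) (α a : ℂ) (n : ℕ) : ℂ :=
  (-1 : ℂ) ^ n * ∑ m ∈ Finset.range (n + 1),
    (stirling1 n m : ℂ) * (α * m + a) ^ (-k)

/-- The formal power series `log(1+X) = ∑_{j≥1} (-1)^{j-1} X^j / j` in `ℂ⟦X⟧`. -/
noncomputable def formalLog : PowerSeries ℂ :=
  PowerSeries.mk fun j => if j = 0 then 0 else (-1 : ℂ) ^ (j - 1) / j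

lemma stirling2_zero_right (n : ℕ) : stirling2 (n+1) 0 = 0 := rfl

lemma stirling2_eq_zero : ∀ n m : ℕ, n < m → stirling2 n m = 0 := by
  intro n
  induction n with
  | zero => intro m h; cases m with
    | zero => omega
    | succ m => rfl
  | succ n ih =>
    intro m h
    cases m with
    | zero => omega
    | succ m =>
      show stirling2 n m + (m + 1) * stirling2 n (m + 1) = 0
      rw [ih m (by omega), ih (m+1) (by omega)]
      ring

lemma key (n : ℕ) : ∀ m : ℕ,
    ∑ j ∈ Finset.range (n+1), (-1:ℂ)^j * (n.choose j : ℂ) * (stirling2 (j+1) (m+1) : ℂ) =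
      (-1:ℂ)^n * (stirling2 n m : ℂ) := by
  induction n with
  | zero => intro m; cases m <;> simp [stirling2]
  | succ n ih =>
    intro m
    have split : ∑ j ∈ Finset.range (n+2), (-1:ℂ)^j * ((n+1).choose j : ℂ) * (stirling2 (j+1) (m+1) : ℂ) =
        (∑ j ∈ Finset.range (n+2), (-1:ℂ)^j * (n.choose j : ℂ) * (stirling2 (j+1) (m+1) : ℂ))
        + ∑ j ∈ Finset.range (n+2), (if j = 0 then 0 else (-1:ℂ)^j * (n.choose (j-1) : ℂ) * (stirling2 (j+1) (m+1) : ℂ)) := by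
      rw [← Finset.sum_add_distrib]
      refine Finset.sum_congr rfl fun j _ => ?_
      cases j with
      | zero => simp
      | succ j =>
        rw [Nat.choose_succ_succ]
        simp only [if_neg (Nat.succ_ne_zero j), Nat.succ_sub_one]
        push_cast
        ring
    rw [split]
    have h1 : ∑ j ∈ Finset.range (n+2), (-1:ℂ)^j * (n.choose j : ℂ) * (stirling2 (j+1) (m+1) : ℂ)
        = (-1:ℂ)^n * (stirling2 n m : ℂ) := by
      rw [Finset.sum_range_succ, Nat.choose_succ_self, ih m]
      simp
    rw [h1]
    have h2 : ∑ j ∈ Finset.range (n+2), (if j = 0 then 0 else (-1:ℂ)^j * (n.choose (j-1) : ℂ) * (stirling2 (j+1) (m+1) : ℂ))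
        = -((∑ j ∈ Finset.range (n+1), (-1:ℂ)^j * (n.choose j : ℂ) * (stirling2 (j+1) m : ℂ))
            + ((m:ℂ)+1) * ∑ j ∈ Finset.range (n+1), (-1:ℂ)^j * (n.choose j : ℂ) * (stirling2 (j+1) (m+1) : ℂ)) := by
      rw [Finset.sum_range_succ']
      simp only [if_neg (Nat.succ_ne_zero _), Nat.succ_sub_one, if_pos trivial, add_zero, if_true]
      rw [Finset.mul_sum, ← Finset.sum_add_distrib, eq_neg_iff_add_eq_zero, ← Finset.sum_add_distrib]
      refine Finset.sum_eq_zero fun j _ => ?_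
      have : stirling2 (j+1+1) (m+1) = stirling2 (j+1) m + (m+1) * stirling2 (j+1) (m+1) := rfl
      rw [this]
      push_cast
      ring
    rw [h2, ih m]
    cases m with
    | zero =>
      have hz : ∑ j ∈ Finset.range (n+1), (-1:ℂ)^j * (n.choose j : ℂ) * (stirling2 (j+1) 0 : ℂ) = 0 := by
        refine Finset.sum_eq_zero fun j _ => ?_
        rw [stirling2_zero_right]; simp
      rw [hz]
      have : stirling2 (n+1) 0 = 0 := rfl
      rw [this]
      push_cast; ring
    | succ m =>
      rw [ih m]
      have : stirling2 (n+1) (m+1) = stirling2 n m + (m+1) * stirling2 n (m+1) := rfl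
      rw [this]
      push_cast
      ring

theorem stmt15 (α a : ℂ) (hα : α ≠ 0) (ha : ∀ m : ℕ, α * m + a ≠ 0) (n : ℕ) (k : ℤ) :
    ∑ j ∈ Finset.range (n + 1), (n.choose j : ℂ) * polyBernoulli k α a (j + 1) =
      ∑ m ∈ Finset.Icc 1 (n + 1),
        (-1 : ℂ) ^ (n + m - 1) * (m.factorial : ℂ) * (stirling2 n (m - 1) : ℂ) *
          (α * m + a) ^ (-k) := by
  have hL : ∑ j ∈ Finset.range (n + 1), (n.choose j : ℂ) * polyBernoulli k α a (j + 1)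
      = ∑ m ∈ Finset.range (n + 2), ((-1:ℂ)^(m+1) * (m.factorial : ℂ) * (α * m + a) ^ (-k)) *
          ∑ j ∈ Finset.range (n + 1), (-1:ℂ)^j * (n.choose j : ℂ) * (stirling2 (j+1) m : ℂ) := by
    have step1 : ∑ j ∈ Finset.range (n + 1), (n.choose j : ℂ) * polyBernoulli k α a (j + 1)
        = ∑ j ∈ Finset.range (n+1), ∑ m ∈ Finset.range (n+2),
            ((-1:ℂ)^(m+1) * (m.factorial : ℂ) * (α * m + a) ^ (-k)) *
              ((-1:ℂ)^j * (n.choose j : ℂ) * (stirling2 (j+1) m : ℂ)) := by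
      refine Finset.sum_congr rfl fun j hj => ?_
      rw [polyBernoulli]
      have hsub : Finset.range (j+1+1) ⊆ Finset.range (n+2) := by
        rw [Finset.mem_range] at hj
        exact Finset.range_subset_range.mpr (by omega)
      rw [← Finset.sum_subset hsub (fun m _ hm => ?_)]
      · rw [Finset.mul_sum, Finset.mul_sum]
        refine Finset.sum_congr rfl fun m _ => ?_
        ring
      · rw [Finset.mem_range, not_lt] at hm
        rw [stirling2_eq_zero (j+1) m (by omega)]
        simp
    rw [step1, Finset.sum_comm]
    exact Finset.sum_congr rfl fun m _ => (Finset.mul_sum _ _ _).symm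
  rw [hL, Finset.sum_range_succ']
  have hz : ∑ j ∈ Finset.range (n + 1), (-1:ℂ)^j * (n.choose j : ℂ) * (stirling2 (j+1) 0 : ℂ) = 0 := by
    refine Finset.sum_eq_zero fun j _ => ?_
    rw [stirling2_zero_right]; simp
  rw [hz, mul_zero, add_zero]
  rw [show Finset.Icc 1 (n+1) = Finset.Ico 1 (n+2) from (Finset.Ico_add_one_right_eq_Icc 1 (n+1)).symm, Finset.sum_Ico_eq_sum_range]
  refine Finset.sum_congr (by norm_num) fun m hm => ?_
  rw [key n m]
  have h1 : n + (1 + m) - 1 = n + m := by omega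
  have h2 : 1 + m = m + 1 := by omega
  rw [h1, h2]
  have h3 : Nat.factorial (m+1) = (m+1) * Nat.factorial m := rfl
  push_cast [pow_add, pow_succ]
  ring
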